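/- Let A ∈ ℝⁿˣⁿ be symmetric, b ∈ ℝⁿ, and α, β ∈ ℝ with α < β. Consider the two-sided trust region subproblem (TTRS): minimize (1/2) xᵀA x + bᵀx over x ∈ ℝⁿ subject to α ≤ xᵀx ≤ β, and its convex relaxation (CTTRS): minimize (1/2) xᵀ(A − λ_min(A) I_n) x + bᵀx + (λ_min(A)/2) t over (x, t) ∈ ℝⁿ × ℝ subject to α ≤ t ≤ β and xᵀx ≤ t. Then x* is a global minimizer of (TTRS) if and only if (x*, x*ᵀx*) is a global minimizer of (CTTRS). -/

import Mathlib

open Matrix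

lemma exists_null_vec {n : ℕ} (hn : 0 < n) {B : Matrix (Fin n) (Fin n) ℝ}
    (hB : B.PosSemidef)
    (hne : ∀ ε > (0:ℝ), ¬ (B - ε • (1 : Matrix (Fin n) (Fin n) ℝ)).PosSemidef) :
    ∃ v : Fin n → ℝ, v ⬝ᵥ v = 1 ∧ B *ᵥ v = 0 := by
  classical
  have hBH : B.IsHermitian := hB.1
  by_cases hzero : ∃ i, hBH.eigenvalues i = 0
  · obtain ⟨i, hi⟩ := hzero
    refine ⟨(hBH.eigenvectorBasis i : EuclideanSpace ℝ (Fin n)), ?_, ?_⟩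
    · have hnorm := hBH.eigenvectorBasis.orthonormal.1 i
      have : ((hBH.eigenvectorBasis i : EuclideanSpace ℝ (Fin n)) ⬝ᵥ
          (hBH.eigenvectorBasis i : EuclideanSpace ℝ (Fin n)))
          = @inner ℝ _ _ (hBH.eigenvectorBasis i) (hBH.eigenvectorBasis i) := by
        rw [PiLp.inner_apply]; simp [dotProduct, mul_comm, sq]
      rw [this, real_inner_self_eq_norm_sq, hnorm]; norm_num
    · simpa [hi] using hBH.mulVec_eigenvectorBasis i
  · push_neg at hzero
    have : Nonempty (Fin n) := Fin.pos_iff_nonempty.mp hn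
    set ε := Finset.univ.inf' Finset.univ_nonempty hBH.eigenvalues with hε
    have hεpos : 0 < ε := by
      rw [hε, Finset.lt_inf'_iff]
      exact fun i _ => lt_of_le_of_ne (hB.eigenvalues_nonneg i) (Ne.symm (hzero i))
    refine absurd ?_ (hne ε hεpos)
    have hU := (Matrix.mem_unitaryGroup_iff).mp (hBH.eigenvectorUnitary).2
    have hrepr : B - ε • (1 : Matrix (Fin n) (Fin n) ℝ)
        = (hBH.eigenvectorUnitary : Matrix (Fin n) (Fin n) ℝ) *
          diagonal (fun i => hBH.eigenvalues i - ε) *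
          (hBH.eigenvectorUnitary : Matrix (Fin n) (Fin n) ℝ)ᴴ := by
      have h1 : (ε • (1 : Matrix (Fin n) (Fin n) ℝ))
          = (hBH.eigenvectorUnitary : Matrix (Fin n) (Fin n) ℝ) *
            (ε • (1 : Matrix (Fin n) (Fin n) ℝ)) *
            star (hBH.eigenvectorUnitary : Matrix (Fin n) (Fin n) ℝ) := by
        rw [mul_smul_comm, mul_one, smul_mul_assoc, hU]
      conv_lhs => rw [hBH.spectral_theorem, Unitary.conjStarAlgAut_apply, h1]
      rw [← Matrix.star_eq_conjTranspose, ← sub_mul, ← mul_sub]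
      congr 2
      rw [smul_one_eq_diagonal, diagonal_sub]
      congr 1
    rw [hrepr]
    exact PosSemidef.mul_mul_conjTranspose_same
      (posSemidef_diagonal_iff.mpr fun i => sub_nonneg.mpr
        (Finset.inf'_le _ (Finset.mem_univ i))) _


/-- equivalence of global minimizers of the two-sided trust region
subproblem (TTRS) and its convex relaxation (CTTRS). `lmin` is the smallest eigenvalue
of `A`, characterized as the greatest `c` with `A - c I ⪰ 0`. -/
theorem stmt11 (n : ℕ) (A : Matrix (Fin n) (Fin n) ℝ) (hA : A.IsSymm)
    (b : Fin n → ℝ) (α β : ℝ) (hαβ : α < β) (lmin : ℝ)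
    (hlmin : IsGreatest {c : ℝ | (A - c • (1 : Matrix (Fin n) (Fin n) ℝ)).PosSemidef} lmin)
    (xs : Fin n → ℝ) :
    -- `xs` globally solves (TTRS)
    ((α ≤ xs ⬝ᵥ xs ∧ xs ⬝ᵥ xs ≤ β) ∧
      (∀ x : Fin n → ℝ, (α ≤ x ⬝ᵥ x ∧ x ⬝ᵥ x ≤ β) →
        (1 / 2) * (xs ⬝ᵥ (A *ᵥ xs)) + b ⬝ᵥ xs ≤ (1 / 2) * (x ⬝ᵥ (A *ᵥ x)) + b ⬝ᵥ x)) ↔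
    -- `(xs, xsᵀxs)` globally solves (CTTRS)
    (((α ≤ xs ⬝ᵥ xs ∧ xs ⬝ᵥ xs ≤ β) ∧ xs ⬝ᵥ xs ≤ xs ⬝ᵥ xs) ∧
      (∀ (x : Fin n → ℝ) (t : ℝ), ((α ≤ t ∧ t ≤ β) ∧ x ⬝ᵥ x ≤ t) →
        (1 / 2) * (xs ⬝ᵥ ((A - lmin • (1 : Matrix (Fin n) (Fin n) ℝ)) *ᵥ xs)) + b ⬝ᵥ xs
            + (lmin / 2) * (xs ⬝ᵥ xs) ≤
          (1 / 2) * (x ⬝ᵥ ((A - lmin • (1 : Matrix (Fin n) (Fin n) ℝ)) *ᵥ x)) + b ⬝ᵥ x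
            + (lmin / 2) * t)) := by
  classical
  have hBmul : ∀ x : Fin n → ℝ,
      (A - lmin • (1 : Matrix (Fin n) (Fin n) ℝ)) *ᵥ x = A *ᵥ x - lmin • x := by
    intro x
    rw [sub_mulVec, smul_mulVec, one_mulVec]
  have key : ∀ (x : Fin n → ℝ) (t : ℝ),
      (1 / 2) * (x ⬝ᵥ ((A - lmin • (1 : Matrix (Fin n) (Fin n) ℝ)) *ᵥ x)) + b ⬝ᵥ x
          + (lmin / 2) * t
        = (1 / 2) * (x ⬝ᵥ (A *ᵥ x)) + b ⬝ᵥ x + (lmin / 2) * (t - x ⬝ᵥ x) := by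
    intro x t
    rw [hBmul, dotProduct_sub, dotProduct_smul, smul_eq_mul]
    ring
  have hsym : ∀ u w : Fin n → ℝ, u ⬝ᵥ (A *ᵥ w) = w ⬝ᵥ (A *ᵥ u) := by
    intro u w
    rw [dotProduct_mulVec, ← mulVec_transpose, hA.eq, dotProduct_comm]
  constructor
  · rintro ⟨hfeas, hmin⟩
    refine ⟨⟨hfeas, le_refl _⟩, ?_⟩
    rintro x t ⟨⟨hαt, htβ⟩, hxt⟩
    rw [key xs, key x, sub_self, mul_zero, add_zero]
    rcases Nat.eq_zero_or_pos n with hn | hn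
    · exfalso
      have hmem : lmin + 1 ∈ {c : ℝ | (A - c • (1 : Matrix (Fin n) (Fin n) ℝ)).PosSemidef} := by
        subst hn
        refine ⟨Subsingleton.elim _ _, fun y => ?_⟩
        rw [Finsupp.sum, Subsingleton.elim y.support ∅]; simp
      have := hlmin.2 hmem
      linarith
    have hB : (A - lmin • (1 : Matrix (Fin n) (Fin n) ℝ)).PosSemidef := hlmin.1
    have hne : ∀ ε > (0:ℝ),
        ¬ ((A - lmin • (1 : Matrix (Fin n) (Fin n) ℝ))
            - ε • (1 : Matrix (Fin n) (Fin n) ℝ)).PosSemidef := by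
      intro ε hε hcon
      have hmem : lmin + ε ∈ {c : ℝ | (A - c • (1 : Matrix (Fin n) (Fin n) ℝ)).PosSemidef} := by
        have heq : A - (lmin + ε) • (1 : Matrix (Fin n) (Fin n) ℝ)
            = (A - lmin • (1 : Matrix (Fin n) (Fin n) ℝ))
              - ε • (1 : Matrix (Fin n) (Fin n) ℝ) := by
          rw [add_smul]; abel
        rw [Set.mem_setOf_eq, heq]
        exact hcon
      have := hlmin.2 hmem
      linarith
    obtain ⟨v, hv1, hv0⟩ := exists_null_vec hn hB hne
    have hAv : A *ᵥ v = lmin • v := by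
      rw [hBmul] at hv0
      exact sub_eq_zero.mp hv0
    set p : ℝ := x ⬝ᵥ v with hp
    set c : ℝ := b ⬝ᵥ v with hc
    set d : ℝ := p ^ 2 + (t - x ⬝ᵥ x) with hd
    have hd0 : 0 ≤ d := by nlinarith [sq_nonneg p]
    have hsq : Real.sqrt d ^ 2 = d := Real.sq_sqrt hd0
    have habs : |p| ≤ Real.sqrt d := by
      rw [← Real.sqrt_sq_eq_abs]
      exact Real.sqrt_le_sqrt (by nlinarith)
    have h1 : p ≤ Real.sqrt d := (le_abs_self p).trans habs
    have h2 : -p ≤ Real.sqrt d := (neg_le_abs p).trans habs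
    obtain ⟨s, hsc, hs2⟩ : ∃ s : ℝ, s * c ≤ 0 ∧ (s + p) ^ 2 = d := by
      rcases le_or_gt c 0 with hcle | hclt
      · exact ⟨-p + Real.sqrt d,
          mul_nonpos_of_nonneg_of_nonpos (by linarith) hcle, by nlinarith⟩
      · exact ⟨-p - Real.sqrt d,
          mul_nonpos_of_nonpos_of_nonneg (by linarith) hclt.le, by nlinarith⟩
    have hq : x ⬝ᵥ x + 2 * s * p + s ^ 2 = t := by nlinarith
    set y : Fin n → ℝ := x + s • v with hy
    have hyy : y ⬝ᵥ y = x ⬝ᵥ x + 2 * s * p + s ^ 2 := by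
      rw [hy]
      simp only [add_dotProduct, dotProduct_add, smul_dotProduct, dotProduct_smul,
        smul_eq_mul, hv1, dotProduct_comm v x, ← hp]
      ring
    have hyt : y ⬝ᵥ y = t := by rw [hyy, hq]
    have hvAx : v ⬝ᵥ (A *ᵥ x) = lmin * p := by
      rw [hsym v x, hAv, dotProduct_smul, smul_eq_mul, ← hp]
    have hAy : A *ᵥ y = A *ᵥ x + (s * lmin) • v := by
      rw [hy, mulVec_add, mulVec_smul, hAv, smul_smul]
    have hyAy : y ⬝ᵥ (A *ᵥ y) = x ⬝ᵥ (A *ᵥ x) + lmin * (2 * s * p + s ^ 2) := by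
      rw [hy, hAy]
      simp only [add_dotProduct, dotProduct_add, smul_dotProduct, dotProduct_smul,
        smul_eq_mul, hv1, hvAx, ← hp]
      ring
    have hby : b ⬝ᵥ y = b ⬝ᵥ x + s * c := by
      rw [hy, dotProduct_add, dotProduct_smul, smul_eq_mul, ← hc]
    have hfy := hmin y ⟨by rw [hyt]; exact hαt, by rw [hyt]; exact htβ⟩
    rw [hyAy, hby] at hfy
    have ht' : t - x ⬝ᵥ x = 2 * s * p + s ^ 2 := by linarith
    rw [ht']
    have hexp : (1 / 2) * (x ⬝ᵥ (A *ᵥ x) + lmin * (2 * s * p + s ^ 2)) + (b ⬝ᵥ x + s * c)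
        = (1 / 2) * (x ⬝ᵥ (A *ᵥ x)) + b ⬝ᵥ x + (lmin / 2) * (2 * s * p + s ^ 2) + s * c := by
      ring
    linarith [hfy, hsc]
  · rintro ⟨⟨hfeas, _⟩, hmin⟩
    refine ⟨hfeas, ?_⟩
    intro x hx
    have h := hmin x (x ⬝ᵥ x) ⟨hx, le_refl _⟩
    rw [key xs, key x, sub_self, mul_zero, add_zero, sub_self, mul_zero, add_zero] at h
    exact h
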